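/- Let N ≥ 1, let d : Fin N → ℝ with d_j ≥ 0 for all j, let a, b, α > 0, and let β ∈ ℝ^N. Define r : [0, ∞) → ℝ by r(p) = ∑_j β_j² / (α·d_j + a·p + b)². Then there exists a unique p* ≥ 0 such that r(p*) = p*. -/
import Mathlib


/-- The fixed point equation `p = r(p) = ∑_j β_j²/(α d_j + a p + b)²` arising from the
quartic-kernel Bregman proximal subproblem has a unique nonnegative solution. -/
theorem pfc_quartic_fixed_point_unique
    (N : ℕ) (hN : 0 < N)
    (d : Fin N → ℝ) (hd : ∀ j, 0 ≤ d j)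
    (a b α : ℝ) (ha : 0 < a) (hb : 0 < b) (hα : 0 < α)
    (β : EuclideanSpace ℝ (Fin N))
    (r : ℝ → ℝ)
    (hr : ∀ p : ℝ, 0 ≤ p → r p = ∑ j, β j ^ 2 / (α * d j + a * p + b) ^ 2) :
    ∃! p : ℝ, 0 ≤ p ∧ r p = p := by
  set g : ℝ → ℝ := fun p => ∑ j, β j ^ 2 / (α * d j + a * p + b) ^ 2 with hg
  have hden : ∀ (j : Fin N) (p : ℝ), 0 ≤ p → 0 < α * d j + a * p + b := by
    intro j p hp
    have := hd j
    nlinarith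
  have hanti : ∀ p q : ℝ, 0 ≤ p → p ≤ q → g q ≤ g p := by
    intro p q hp hpq
    apply Finset.sum_le_sum
    intro j _
    have hq : 0 ≤ q := hp.trans hpq
    have h1 := hden j p hp
    have h2 := hden j q hq
    apply div_le_div_of_nonneg_left (by positivity) (by positivity)
    exact pow_le_pow_left₀ h1.le (by nlinarith) 2
  have hg0 : 0 ≤ g 0 := Finset.sum_nonneg fun j _ => by positivity
  have hcont : ContinuousOn (fun p => g p - p) (Set.Icc 0 (g 0)) := by
    apply ContinuousOn.sub _ (continuous_id.continuousOn)
    apply continuousOn_finset_sum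
    intro j _
    apply ContinuousOn.div continuousOn_const
    · exact (Continuous.continuousOn (by continuity))
    · intro p hp
      exact pow_ne_zero 2 (hden j p hp.1).ne'
  have key : (0:ℝ) ∈ (fun p => g p - p) '' Set.Icc 0 (g 0) := by
    apply intermediate_value_Icc' hg0 hcont
    constructor
    · have := hanti 0 (g 0) le_rfl hg0
      simpa using this
    · simpa using hg0
  obtain ⟨p, hpmem, hpfix⟩ := key
  have hp0 : 0 ≤ p := hpmem.1
  have hgp : g p = p := sub_eq_zero.mp hpfix
  refine ⟨p, ⟨hp0, by rw [hr p hp0]; exact hgp⟩, ?_⟩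
  rintro q ⟨hq0, hqfix⟩
  have hgq : g q = q := by
    show (∑ j, β j ^ 2 / (α * d j + a * q + b) ^ 2) = q
    rw [← hr q hq0]; exact hqfix
  rcases lt_trichotomy q p with h | h | h
  · have := hanti q p hq0 h.le
    rw [hgp, hgq] at this
    linarith
  · exact h
  · have := hanti p q hp0 h.le
    rw [hgp, hgq] at this
    linarith
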